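/- Fix an integer n ≥ 1 and a symmetric-form matrix W with β = −α and a1+b1+n·(a2+b2) = 0. Then ‖W‖_* = (n−1)·√(2·(a1²+b1²)+2·|a1²−b1²|) + 2·√((a1+n·a2)²+n·α²), and moreover (n−1)·√(2·(a1²+b1²)+2·|a1²−b1²|) = 2·(n−1)·max{|a1|,|b1|}. -/

import Mathlib

/-- The nuclear norm of a real matrix: the trace of the positive semidefinite
square root of `Wᵀ * W` (equivalently, the sum of the singular values of `W`). -/
noncomputable def nuclearNorm {m k : Type*} [Fintype m] [Fintype k] [DecidableEq k]
    (W : Matrix m k ℝ) : ℝ :=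
  (((Matrix.posSemidef_conjTranspose_mul_self W).1.eigenvectorUnitary : Matrix k k ℝ) *
    Matrix.diagonal ((√·) ∘ (Matrix.posSemidef_conjTranspose_mul_self W).1.eigenvalues) *
    (star (Matrix.posSemidef_conjTranspose_mul_self W).1.eigenvectorUnitary : Matrix k k ℝ)).trace

/-- The symmetric-form matrix in `ℝ^{(2n+2)×(2n)}`.  Rows are indexed by the input
tokens `a_1,…,a_n` (`Sum.inl i`), `b_1,…,b_n` (`Sum.inr (Sum.inl i)`) and the relation
tokens `r_1, r_2` (`Sum.inr (Sum.inr k)`, `k = 0, 1`); columns by the output tokens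
`b_1,…,b_n` (`Sum.inl j`) and `c_1,…,c_n` (`Sum.inr j`). -/
def symW (n : ℕ) (a1 a2 b1 b2 α β : ℝ) :
    Matrix (Fin n ⊕ Fin n ⊕ Fin 2) (Fin n ⊕ Fin n) ℝ :=
  fun r y =>
    match r, y with
    | Sum.inl i, Sum.inl j => (if i = j then a1 else 0) + a2
    | Sum.inl i, Sum.inr j => (if i = j then b1 else 0) + b2
    | Sum.inr (Sum.inl i), Sum.inl j => (if i = j then b1 else 0) + b2
    | Sum.inr (Sum.inl i), Sum.inr j => (if i = j then a1 else 0) + a2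
    | Sum.inr (Sum.inr k), Sum.inl _ => if k = 0 then α else β
    | Sum.inr (Sum.inr k), Sum.inr _ => if k = 0 then β else α

open Matrix

noncomputable section
namespace NNaux

/-- The all-ones matrix. -/
def Jm (n : ℕ) : Matrix (Fin n) (Fin n) ℝ := Matrix.of fun _ _ => (1:ℝ)

/-- `c • 1 + d • J`. -/
def gen (n : ℕ) (c d : ℝ) : Matrix (Fin n) (Fin n) ℝ := c • 1 + d • Jm n

lemma Jm_mul_Jm (n : ℕ) : Jm n * Jm n = (n:ℝ) • Jm n := by
  ext i j; simp [Jm, Matrix.mul_apply]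

lemma gen_mul (n : ℕ) (c d e f : ℝ) :
    gen n c d * gen n e f = gen n (c*e) (c*f + d*e + n*d*f) := by
  simp only [gen, add_mul, mul_add, Matrix.smul_mul, Matrix.mul_smul, Jm_mul_Jm,
    mul_one, one_mul, smul_smul]
  module

lemma gen_add (n : ℕ) (c d e f : ℝ) : gen n c d + gen n e f = gen n (c+e) (d+f) := by
  simp [gen, add_smul]; abel

lemma gen_smul (n : ℕ) (t c d : ℝ) : t • gen n c d = gen n (t*c) (t*d) := by
  simp [gen, smul_add, smul_smul]

lemma gen_transpose (n : ℕ) (c d : ℝ) : (gen n c d)ᵀ = gen n c d := by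
  ext i j
  simp [gen, Jm, Matrix.one_apply, eq_comm]

lemma trace_gen (n : ℕ) (c d : ℝ) : (gen n c d).trace = n*c + n*d := by
  simp [gen, Jm, Matrix.trace, Matrix.diag, Matrix.one_apply, Finset.sum_add_distrib,
    mul_comm]

lemma trace_fromBlocks {n : ℕ} (A B C D : Matrix (Fin n) (Fin n) ℝ) :
    (fromBlocks A B C D).trace = A.trace + D.trace := by
  simp [Matrix.trace, Fintype.sum_sum_type, fromBlocks, Matrix.diag]

lemma psd_smul {N : Type*} [Fintype N] {P : Matrix N N ℝ} (hP : P.PosSemidef)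
    {c : ℝ} (hc : 0 ≤ c) : (c • P).PosSemidef := by
  refine ⟨?_, fun x => ?_⟩
  · unfold Matrix.IsHermitian
    rw [conjTranspose_smul, hP.1]
    simp
  · exact (hP.smul hc).2 x

lemma psd_of_idem {N : Type*} [Fintype N] [DecidableEq N] {P : Matrix N N ℝ}
    (hsym : Pᵀ = P) (hidem : P * P = P) : P.PosSemidef := by
  have h : Pᴴ * P = P := by
    rw [conjTranspose_eq_transpose_of_trivial, hsym, hidem]
  have := Matrix.posSemidef_conjTranspose_mul_self P
  rwa [h] at this

lemma WtW (n : ℕ) (a1 a2 b1 b2 α : ℝ) :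
    (symW n a1 a2 b1 b2 α (-α))ᴴ * symW n a1 a2 b1 b2 α (-α) =
      fromBlocks
        (gen n (a1^2+b1^2) (2*a1*a2+2*b1*b2+n*(a2^2+b2^2)+2*α^2))
        (gen n (2*a1*b1) (2*(a1*b2+a2*b1)+2*n*a2*b2-2*α^2))
        (gen n (2*a1*b1) (2*(a1*b2+a2*b1)+2*n*a2*b2-2*α^2))
        (gen n (a1^2+b1^2) (2*a1*a2+2*b1*b2+n*(a2^2+b2^2)+2*α^2)) := by
  ext i j
  rcases i with i | i <;> rcases j with j | j <;>
    simp [Matrix.mul_apply, symW, gen, Jm, fromBlocks, Fintype.sum_sum_type,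
      Fin.sum_univ_two, Matrix.one_apply, add_mul, mul_add, Finset.sum_add_distrib,
      Finset.sum_ite_eq, ite_and, mul_ite, ite_mul] <;>
    by_cases h : i = j <;>
    simp [h, show (¬ i = j) → ¬ j = i from fun hh h2 => hh h2.symm] <;> ring

lemma gen_eq_gen {n : ℕ} {c d c' d' : ℝ} (h1 : c = c') (h2 : d = d') :
    gen n c d = gen n c' d' := by rw [h1, h2]

lemma abs_add_abs_sub (a1 b1 : ℝ) : |a1+b1| + |a1-b1| = 2 * max |a1| |b1| := by
  rcases abs_cases a1 with ⟨h1,h1'⟩|⟨h1,h1'⟩ <;>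
  rcases abs_cases b1 with ⟨h2,h2'⟩|⟨h2,h2'⟩ <;>
  rcases abs_cases (a1+b1) with ⟨h3,h3'⟩|⟨h3,h3'⟩ <;>
  rcases abs_cases (a1-b1) with ⟨h4,h4'⟩|⟨h4,h4'⟩ <;>
  rcases max_cases |a1| |b1| with ⟨h5,h5'⟩|⟨h5,h5'⟩ <;>
  linarith

end NNaux
end

open NNaux in
/-- The nuclear norm of a symmetric-form matrix with `β = −α` and
`a1+b1+n·(a2+b2) = 0`, together with the structural simplification of its first term. -/
theorem nuclearNorm_symW (n : ℕ) (hn : 1 ≤ n) (a1 a2 b1 b2 α β : ℝ)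
    (hβ : β = -α) (hlin : a1 + b1 + n * (a2 + b2) = 0) :
    nuclearNorm (symW n a1 a2 b1 b2 α β) =
      ((n : ℝ) - 1) * Real.sqrt (2 * (a1 ^ 2 + b1 ^ 2) + 2 * |a1 ^ 2 - b1 ^ 2|) +
        2 * Real.sqrt ((a1 + n * a2) ^ 2 + n * α ^ 2) ∧
    ((n : ℝ) - 1) * Real.sqrt (2 * (a1 ^ 2 + b1 ^ 2) + 2 * |a1 ^ 2 - b1 ^ 2|) =
      2 * ((n : ℝ) - 1) * max |a1| |b1| := by
  subst hβ
  have hn0 : (0:ℝ) < (n:ℝ) := by exact_mod_cast Nat.lt_of_lt_of_le Nat.zero_lt_one hn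
  have h2n : (2*(n:ℝ)) ≠ 0 := by positivity
  set u : ℝ := |a1 - b1| with hu
  set w : ℝ := |a1 + b1| with hw
  set σ : ℝ := 2 * Real.sqrt ((a1 + n * a2) ^ 2 + n * α ^ 2) with hσ
  have hu2 : u^2 = (a1-b1)^2 := sq_abs _
  have hw2 : w^2 = (a1+b1)^2 := sq_abs _
  have hσ2 : σ^2 = 4*((a1+n*a2)^2+n*α^2) := by
    rw [hσ, mul_pow, Real.sq_sqrt (by positivity)]; ring
  have hu0 : 0 ≤ u := abs_nonneg _
  have hw0 : 0 ≤ w := abs_nonneg _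
  have hσ0 : 0 ≤ σ := by positivity
  obtain ⟨t, ht⟩ : ∃ x : ℝ, 2*(n:ℝ)*x = -1 := ⟨(-1)/(2*n), by field_simp⟩
  obtain ⟨dA, hdA⟩ : ∃ x : ℝ, 2*(n:ℝ)*x = σ - (w+u) := ⟨(σ-(w+u))/(2*n), by field_simp⟩
  obtain ⟨dB, hdB⟩ : ∃ x : ℝ, 2*(n:ℝ)*x = -σ - (w-u) := ⟨(-σ-(w-u))/(2*n), by field_simp⟩
  set cA : ℝ := (w+u)/2 with hcA
  set cB : ℝ := (w-u)/2 with hcB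
  set S : Matrix (Fin n ⊕ Fin n) (Fin n ⊕ Fin n) ℝ :=
    fromBlocks (gen n cA dA) (gen n cB dB) (gen n cB dB) (gen n cA dA) with hS
  -- S is PSD
  set P1 : Matrix (Fin n ⊕ Fin n) (Fin n ⊕ Fin n) ℝ :=
    fromBlocks (gen n (1/2) t) (gen n (1/2) t) (gen n (1/2) t) (gen n (1/2) t) with hP1
  set P2 : Matrix (Fin n ⊕ Fin n) (Fin n ⊕ Fin n) ℝ :=
    fromBlocks (gen n (1/2) t) (gen n (-(1/2)) (-t)) (gen n (-(1/2)) (-t)) (gen n (1/2) t) with hP2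
  set P3 : Matrix (Fin n ⊕ Fin n) (Fin n ⊕ Fin n) ℝ :=
    fromBlocks (gen n 0 (-t)) (gen n 0 t) (gen n 0 t) (gen n 0 (-t)) with hP3
  have hP1psd : P1.PosSemidef := by
    refine psd_of_idem ?_ ?_
    · rw [hP1, fromBlocks_transpose]; simp [gen_transpose]
    · rw [hP1, fromBlocks_multiply]
      simp only [gen_mul, gen_add]
      refine Matrix.fromBlocks_inj.mpr ⟨?_, ?_, ?_, ?_⟩ <;>
        exact gen_eq_gen (by norm_num) (by linear_combination t*ht)
  have hP2psd : P2.PosSemidef := by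
    refine psd_of_idem ?_ ?_
    · rw [hP2, fromBlocks_transpose]; simp [gen_transpose]
    · rw [hP2, fromBlocks_multiply]
      simp only [gen_mul, gen_add]
      refine Matrix.fromBlocks_inj.mpr
        ⟨gen_eq_gen (by norm_num) (by linear_combination t*ht),
         gen_eq_gen (by norm_num) (by linear_combination (-t)*ht),
         gen_eq_gen (by norm_num) (by linear_combination (-t)*ht),
         gen_eq_gen (by norm_num) (by linear_combination t*ht)⟩
  have hP3psd : P3.PosSemidef := by
    refine psd_of_idem ?_ ?_
    · rw [hP3, fromBlocks_transpose]; simp [gen_transpose]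
    · rw [hP3, fromBlocks_multiply]
      simp only [gen_mul, gen_add]
      refine Matrix.fromBlocks_inj.mpr
        ⟨gen_eq_gen (by norm_num) (by linear_combination t*ht),
         gen_eq_gen (by norm_num) (by linear_combination (-t)*ht),
         gen_eq_gen (by norm_num) (by linear_combination (-t)*ht),
         gen_eq_gen (by norm_num) (by linear_combination t*ht)⟩
  have hdecomp : S = w • P1 + u • P2 + σ • P3 := by
    rw [hS, hP1, hP2, hP3, fromBlocks_smul, fromBlocks_smul, fromBlocks_smul,
      fromBlocks_add, fromBlocks_add]
    simp only [gen_smul, gen_add]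
    have e1 : w * (1/2) + u * (1/2) + σ * 0 = cA := by rw [hcA]; ring
    have e2 : w * t + u * t + σ * (-t) = dA := by
      apply mul_left_cancel₀ h2n
      linear_combination (w+u-σ)*ht - hdA
    have e3 : w * (1/2) + u * (-(1/2)) + σ * 0 = cB := by rw [hcB]; ring
    have e4 : w * t + u * (-t) + σ * t = dB := by
      apply mul_left_cancel₀ h2n
      linear_combination (w-u+σ)*ht - hdB
    refine Matrix.fromBlocks_inj.mpr
      ⟨gen_eq_gen (by linear_combination -e1) (by linear_combination -e2),
       gen_eq_gen (by linear_combination -e3) (by linear_combination -e4),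
       gen_eq_gen (by linear_combination -e3) (by linear_combination -e4),
       gen_eq_gen (by linear_combination -e1) (by linear_combination -e2)⟩
  have hSpsd : S.PosSemidef := by
    rw [hdecomp]
    exact ((psd_smul hP1psd hw0).add (psd_smul hP2psd hu0)).add (psd_smul hP3psd hσ0)
  -- S * S = WᵀW
  have hS2 : S ^ 2 = (symW n a1 a2 b1 b2 α (-α))ᴴ * symW n a1 a2 b1 b2 α (-α) := by
    rw [pow_two, WtW, hS, fromBlocks_multiply]
    simp only [gen_mul, gen_add]
    have e1 : cA*cA + cB*cB = a1^2+b1^2 := by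
      rw [hcA, hcB]; linear_combination hu2/2 + hw2/2
    have e2 : (cA*dA + dA*cA + n*dA*dA) + (cB*dB + dB*cB + n*dB*dB) =
        2*a1*a2+2*b1*b2+n*(a2^2+b2^2)+2*α^2 := by
      apply mul_left_cancel₀ (show (4*(n:ℝ)^2) ≠ 0 by positivity)
      rw [hcA, hcB]
      linear_combination (4*n*((w+u)/2) + n*(2*n*dA) + n*(σ-(w+u)))*hdA +
        (4*n*((w-u)/2) + n*(2*n*dB) + n*(-σ-(w-u)))*hdB +
        2*n*hσ2 - 2*n*hu2 - 2*n*hw2 + 4*n*(a1+n*a2-b1-n*b2)*hlin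
    have e3 : cA*cB + cB*cA = 2*a1*b1 := by
      rw [hcA, hcB]; linear_combination hw2/2 - hu2/2
    have e4 : (cA*dB + dA*cB + n*dA*dB) + (cB*dA + dB*cA + n*dB*dA) =
        2*(a1*b2+a2*b1)+2*n*a2*b2-2*α^2 := by
      apply mul_left_cancel₀ (show (4*(n:ℝ)^2) ≠ 0 by positivity)
      rw [hcA, hcB]
      linear_combination (4*n*((w-u)/2) + 2*n*(2*n*dB))*hdA +
        (4*n*((w+u)/2) + 2*n*(σ-(w+u)))*hdB -
        2*n*hσ2 + 2*n*hu2 - 2*n*hw2 - 8*n*(a1+n*a2)*hlin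
    refine Matrix.fromBlocks_inj.mpr
      ⟨gen_eq_gen (by linear_combination e1) (by linear_combination e2),
       gen_eq_gen (by linear_combination e3) (by linear_combination e4),
       gen_eq_gen (by linear_combination e3) (by linear_combination e4),
       gen_eq_gen (by linear_combination e1) (by linear_combination e2)⟩
  -- identify the square root
  have hsqrt : (Matrix.posSemidef_conjTranspose_mul_self
      (symW n a1 a2 b1 b2 α (-α))).1.cfc Real.sqrt = S := by
    rw [← IsHermitian.cfc_eq, ← hS2,
      ← cfc_comp_pow (ha := hSpsd.1.isSelfAdjoint) Real.sqrt 2 S]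
    have hspec := (posSemidef_iff_isHermitian_and_spectrum_nonneg.mp hSpsd).2
    rw [cfc_congr (g := id) (fun x hx => by
      simp [Real.sqrt_sq (show (0:ℝ) ≤ x from hspec hx)])]
    exact cfc_id ℝ S hSpsd.1.isSelfAdjoint
  have htrace : nuclearNorm (symW n a1 a2 b1 b2 α (-α)) = S.trace := by
    rw [nuclearNorm, ← hsqrt, IsHermitian.cfc, Unitary.conjStarAlgAut_apply]
    rfl
  have htrS : S.trace = ((n:ℝ)-1)*(w+u) + σ := by
    rw [hS, trace_fromBlocks, trace_gen]
    linear_combination hdA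
  have hQ : Real.sqrt (2*(a1^2+b1^2) + 2*|a1^2-b1^2|) = w + u := by
    have habs : |a1^2 - b1^2| = w * u := by
      rw [hw, hu, ← abs_mul]; congr 1; ring
    rw [habs, show 2*(a1^2+b1^2) + 2*(w*u) = (w+u)^2 by linear_combination -hu2 - hw2,
      Real.sqrt_sq (by positivity)]
  constructor
  · rw [htrace, htrS, hQ, hσ]
  · rw [hQ, hw, hu, abs_add_abs_sub]; ring
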